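/- arXiv:1912.11867 — 5 statements merged into one kernel-verified Lean document; each statement's English description precedes it below -/
import Mathlib

section
/- Every abstract group homomorphism from a compact Hausdorff topological group K to a torsion-free group G containing no subgroup isomorphic to ℚ and no subgroup isomorphic to the p-adic integers ℤ_p for any prime p is trivial. -/
universe u

/-- Old Mathlib definition (removed since): a monoid is torsion-free if no nontrivial
element has finite order. -/
def Monoid.IsTorsionFree (G : Type*) [Monoid G] : Prop :=
  ∀ g : G, g ≠ 1 → ¬IsOfFinOrder g

/-- `G` has no subgroup isomorphic to the additive rationals `ℚ`. -/
def NoRatSubgroup (G : Type*) [Group G] : Prop :=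
  ∀ f : Multiplicative ℚ →* G, ¬ Function.Injective f

/-- `G` has no subgroup isomorphic to the additive `p`-adic integers for any prime `p`. -/
def NoPadicSubgroup (G : Type*) [Group G] : Prop :=
  ∀ (p : ℕ) [Fact p.Prime], ∀ f : Multiplicative (PadicInt p) →* G, ¬ Function.Injective f

/-- `G` is lcH-slender: every abstract group homomorphism from a locally compact
Hausdorff topological group to `G` has open kernel. -/
def LCHSlender (G : Type*) [Group G] : Prop :=
  ∀ (L : Type u) [Group L] [TopologicalSpace L] [IsTopologicalGroup L]
    [LocallyCompactSpace L] [T2Space L],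
    ∀ φ : L →* G, IsOpen (φ.ker : Set L)

set_option linter.unusedSectionVars false
set_option linter.unusedVariables false

section NumberTheory
open Nat Finset

/-- product of primes in `(a, b]` -/
def Qp (a b : ℕ) : ℕ := ∏ q ∈ Finset.filter Nat.Prime (Finset.Ioc a b), q

lemma Qp_pos (a b : ℕ) : 0 < Qp a b :=
  Finset.prod_pos (fun q hq => (Finset.mem_filter.1 hq).2.pos)

lemma Qp_ne_zero (a b : ℕ) : Qp a b ≠ 0 := (Qp_pos a b).ne'

lemma Qp_mul {a b c : ℕ} (hab : a ≤ b) (hbc : b ≤ c) : Qp a b * Qp b c = Qp a c := by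
  unfold Qp
  rw [Finset.prod_filter, Finset.prod_filter, Finset.prod_filter]
  exact Finset.prod_Ioc_consecutive _ hab hbc

lemma Qp_coprime {a b c d : ℕ} (h : b ≤ c) : Nat.Coprime (Qp a b) (Qp c d) := by
  apply Nat.Coprime.prod_left
  intro q hq
  apply Nat.Coprime.prod_right
  intro r hr
  obtain ⟨hq1, hq2⟩ := Finset.mem_filter.1 hq
  obtain ⟨hr1, hr2⟩ := Finset.mem_filter.1 hr
  rw [Nat.coprime_primes hq2 hr2]
  have : q ≤ b := (Finset.mem_Ioc.1 hq1).2
  have : c < r := (Finset.mem_Ioc.1 hr1).1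
  omega

lemma Qp_coprime_factorial {N a b : ℕ} (h : N ≤ a) : Nat.Coprime (N !) (Qp a b) := by
  apply Nat.Coprime.prod_right
  intro r hr
  obtain ⟨hr1, hr2⟩ := Finset.mem_filter.1 hr
  have hra : a < r := (Finset.mem_Ioc.1 hr1).1
  exact Nat.Coprime.symm ((Nat.Prime.coprime_iff_not_dvd hr2).2
    (fun hdvd => by have := (Nat.Prime.dvd_factorial hr2).1 hdvd; omega))

lemma Qp_succ_prime {N : ℕ} (h : (N+1).Prime) : Qp N (N+1) = N+1 := by
  unfold Qp
  rw [Nat.Ioc_succ_singleton, Finset.filter_singleton, if_pos h, Finset.prod_singleton]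

lemma Qp_succ_composite {N : ℕ} (h : ¬ (N+1).Prime) : Qp N (N+1) = 1 := by
  unfold Qp
  rw [Nat.Ioc_succ_singleton, Finset.filter_singleton, if_neg h, Finset.prod_empty]

lemma factorial_dvd_Qp_pow (n : ℕ) : n ! ∣ Qp 0 n ^ n := by
  rcases Nat.eq_zero_or_pos n with rfl | hn
  · simp
  rw [← Nat.factorization_le_iff_dvd (Nat.factorial_ne_zero n)
    (pow_ne_zero _ (Qp_ne_zero 0 n))]
  intro q
  rcases em q.Prime with hq | hq
  swap
  · simp [Nat.factorization_eq_zero_of_not_prime _ hq]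
  rcases le_or_gt q n with hqn | hqn
  swap
  · have : ¬ q ∣ n ! := fun hdvd => by have := (Nat.Prime.dvd_factorial hq).1 hdvd; omega
    simp [Nat.factorization_eq_zero_of_not_dvd this]
  -- q prime, q ≤ n
  haveI : Fact q.Prime := ⟨hq⟩
  have hval : (n !).factorization q ≤ n := by
    rw [Nat.factorization_def _ hq]
    have h1 := _root_.sub_one_mul_padicValNat_factorial (p := q) n
    have h2 : 1 ≤ q - 1 := by have := hq.two_le; omega
    calc padicValNat q (n !) ≤ (q - 1) * padicValNat q (n !) := Nat.le_mul_of_pos_left _ (by omega)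
    _ = n - (q.digits n).sum := h1
    _ ≤ n := Nat.sub_le _ _
  have hQfac : (Qp 0 n).factorization q = 1 := by
    unfold Qp
    rw [Nat.factorization_prod (fun x hx => (Finset.mem_filter.1 hx).2.pos.ne')]
    rw [Finset.sum_apply']
    rw [Finset.sum_eq_single q]
    · rw [(Nat.Prime.factorization hq)]
      simp
    · intro r hr hrq
      rw [(Nat.Prime.factorization (Finset.mem_filter.1 hr).2)]
      simp [Finsupp.single_apply, hrq]
    · intro hqmem
      exfalso
      exact hqmem (Finset.mem_filter.2 ⟨Finset.mem_Ioc.2 ⟨hq.pos, hqn⟩, hq⟩)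
  rw [Nat.factorization_pow]
  simp only [Finsupp.smul_apply, smul_eq_mul, hQfac, mul_one]
  exact hval

lemma int_bezout {a b : ℕ} (h : Nat.Coprime a b) : ∃ u v : ℤ, u * a + v * b = 1 := by
  obtain ⟨u, v, huv⟩ := Nat.isCoprime_iff_coprime.mpr h
  exact ⟨u, v, huv⟩

lemma int_crt {a b : ℕ} (h : Nat.Coprime a b) (r s : ℤ) :
    ∃ x : ℤ, (a : ℤ) ∣ (x - r) ∧ (b : ℤ) ∣ (x - s) := by
  obtain ⟨u, v, huv⟩ := int_bezout h
  refine ⟨s * u * a + r * v * b, ⟨(s - r) * u, by linear_combination r * huv⟩,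
    ⟨(r - s) * v, by linear_combination s * huv⟩⟩

lemma int_inv {a b : ℕ} (h : Nat.Coprime a b) : ∃ t : ℤ, (b : ℤ) ∣ (a * t - 1) := by
  obtain ⟨u, v, huv⟩ := int_bezout h
  exact ⟨u, ⟨-v, by linarith⟩⟩

lemma exists_u (N n : ℕ) : ∃ x : ℤ,
    ((Qp 0 N ^ n : ℕ) : ℤ) ∣ x ∧ ((Qp N n ^ n : ℕ) : ℤ) ∣ ((N ! : ℕ) : ℤ) * x - 1 := by
  have hcop : Nat.Coprime (Qp 0 N ^ n) (Qp N n ^ n) :=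
    Nat.Coprime.pow n n (Qp_coprime le_rfl)
  have hcopf : Nat.Coprime (N !) (Qp N n ^ n) := Nat.Coprime.pow_right _ (Qp_coprime_factorial le_rfl)
  obtain ⟨t, ht⟩ := int_inv hcopf
  obtain ⟨x, hx1, hx2⟩ := int_crt hcop 0 t
  refine ⟨x, by simpa using hx1, ?_⟩
  have : ((N ! : ℕ) : ℤ) * x - 1 = ((N ! : ℕ) : ℤ) * (x - t) + (((N !) : ℕ) * t - 1) := by ring
  rw [this]
  exact dvd_add (Dvd.dvd.mul_left hx2 _) ht

end NumberTheory

section GroupHelpers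
open Nat Multiplicative

variable {G : Type*} [Group G]


variable {G : Type*} [Group G]

lemma tf_pow_eq_one (hTF : Monoid.IsTorsionFree G) {x : G} {n : ℕ} (hn : n ≠ 0)
    (h : x ^ n = 1) : x = 1 := by
  by_contra hx
  exact hTF x hx (isOfFinOrder_iff_pow_eq_one.2 ⟨n, Nat.pos_of_ne_zero hn, h⟩)

lemma tf_zpow_eq_one (hTF : Monoid.IsTorsionFree G) {x : G} {n : ℤ} (hn : n ≠ 0)
    (h : x ^ n = 1) : x = 1 := by
  apply tf_pow_eq_one hTF (n := n.natAbs) (by simpa using hn)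
  rcases Int.natAbs_eq n with he | he
  · rw [← zpow_natCast, ← he, h]
  · rw [← zpow_natCast, ← neg_neg (n.natAbs : ℤ), ← he, zpow_neg, h, inv_one]

lemma rat_hom_trivial (hTF : Monoid.IsTorsionFree G) (hQ : NoRatSubgroup G)
    (f : Multiplicative ℚ →* G) (x : Multiplicative ℚ) : f x = 1 := by
  have hni := hQ f
  simp only [Function.Injective, not_forall] at hni
  obtain ⟨a, b, hab, hne⟩ := hni
  set z : ℚ := a.toAdd - b.toAdd with hz
  have hzne : z ≠ 0 := by
    simp only [hz, sub_ne_zero]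
    exact fun h => hne (by simpa using congrArg Multiplicative.ofAdd h)
  have hfz : f (Multiplicative.ofAdd z) = 1 := by
    rw [hz, ofAdd_sub]
    simp [map_div, hab]
  set r : ℚ := x.toAdd with hr
  set s : ℚ := r / z with hs
  have key : (s.den : ℤ) • r = s.num • z := by
    have h1 : (s.den : ℚ) * s = (s.num : ℚ) := by
      rw [mul_comm]; exact_mod_cast Rat.mul_den_eq_num s
    have : r = s * z := by rw [hs]; field_simp
    push_cast [zsmul_eq_mul]
    rw [this, ← mul_assoc, h1]
  have : f x ^ (s.den : ℤ) = 1 := by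
    have hx : x ^ (s.den : ℤ) = Multiplicative.ofAdd ((s.den : ℤ) • r) := (ofAdd_zsmul _ r).symm
    rw [← map_zpow, hx, key, ofAdd_zsmul, map_zpow, hfz, one_zpow]
  exact tf_zpow_eq_one hTF (by exact_mod_cast s.den_nz) this


lemma coherent_pow (g : ℕ → G) (hg : ∀ n, g n = g (n+1) ^ (n+1)) :
    ∀ {n m : ℕ}, n ≤ m → g n = g m ^ (m ! / n !) := by
  intro n m h
  induction m, h using Nat.le_induction with
  | base => rw [Nat.div_self (Nat.factorial_pos n), pow_one]
  | succ m hm ih =>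
    rw [ih, hg m, ← pow_mul]
    congr 1
    rw [Nat.factorial_succ, Nat.mul_div_assoc _ (Nat.factorial_dvd_factorial hm)]

lemma coherent_trivial (hTF : Monoid.IsTorsionFree G) (hQ : NoRatSubgroup G)
    (g : ℕ → G) (hg : ∀ n, g n = g (n+1) ^ (n+1)) : ∀ n, g n = 1 := by
  classical
  set val : ℚ → ℕ → G := fun q m => g m ^ (q.num * ((m ! / q.den : ℕ) : ℤ)) with hval
  have cast_eq : ∀ (q : ℚ) (m : ℕ), q.den ∣ m ! →
      ((q.num * ((m ! / q.den : ℕ) : ℤ) : ℤ) : ℚ) = q * (m ! : ℚ) := by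
    intro q m h
    have hden : (q.den : ℚ) ≠ 0 := by exact_mod_cast q.den_nz
    rw [Int.cast_mul, Int.cast_natCast, Nat.cast_div h hden]
    have h2 : (q.num : ℚ) = q * q.den := by exact_mod_cast (Rat.mul_den_eq_num q).symm
    field_simp
    rw [h2]
    ring
  have val_stable : ∀ (q : ℚ) (m m' : ℕ), q.den ≤ m → m ≤ m' → val q m = val q m' := by
    intro q m m' hdm hmm'
    have hdvd : q.den ∣ m ! := Nat.dvd_factorial q.pos hdm
    have hff : m ! ∣ m' ! := Nat.factorial_dvd_factorial hmm'
    have hnat : (m' ! / m !) * (m ! / q.den) = m' ! / q.den := by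
      rw [Nat.div_mul_div_comm hff hdvd, mul_comm (m !) q.den, Nat.mul_div_mul_right _ _ (Nat.factorial_pos m)]
    rw [hval]
    simp only
    rw [coherent_pow g hg hmm', ← zpow_natCast (g m') (m' ! / m !), ← zpow_mul]
    congr 1
    rw [← hnat]
    push_cast
    ring
  set F : Multiplicative ℚ →* G := MonoidHom.mk' (fun y => val y.toAdd y.toAdd.den) (by
    intro a b
    show val (a.toAdd + b.toAdd) (a.toAdd + b.toAdd).den
        = val a.toAdd a.toAdd.den * val b.toAdd b.toAdd.den
    set q : ℚ := a.toAdd with hqd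
    set r : ℚ := b.toAdd with hrd
    set m : ℕ := q.den + r.den + (q + r).den with hm
    have h1 : q.den ≤ m := by omega
    have h2 : r.den ≤ m := by omega
    have h3 : (q + r).den ≤ m := by omega
    rw [val_stable (q+r) ((q+r).den) m le_rfl h3, val_stable q q.den m le_rfl h1,
      val_stable r r.den m le_rfl h2]
    rw [hval]
    simp only
    rw [← zpow_add]
    congr 1
    have hq : q.den ∣ m ! := Nat.dvd_factorial q.pos h1
    have hr : r.den ∣ m ! := Nat.dvd_factorial r.pos h2
    have hqr : (q + r).den ∣ m ! := Nat.dvd_factorial (q+r).pos h3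
    apply @Int.cast_injective ℚ
    rw [Int.cast_add, cast_eq _ _ hqr, cast_eq _ _ hq, cast_eq _ _ hr]
    ring) with hF
  have hF1 : F (Multiplicative.ofAdd (1 : ℚ)) = g 1 := by
    rw [hF]
    simp only [MonoidHom.mk'_apply]
    have : (Multiplicative.ofAdd (1:ℚ)).toAdd = (1:ℚ) := rfl
    rw [this, hval]
    norm_num
  have hg1 : g 1 = 1 := by rw [← hF1]; exact rat_hom_trivial hTF hQ F _
  intro n
  rcases Nat.eq_zero_or_pos n with h | h
  · subst h; rw [hg 0, hg1, one_pow]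
  · have := coherent_pow g hg h
    rw [hg1] at this
    have hpow : g n ^ (n ! / 1!) = 1 := this.symm
    apply tf_pow_eq_one hTF (n := n ! / 1!) _ hpow
    simp [Nat.factorial_ne_zero]


end GroupHelpers

section PadicSec
open Nat Multiplicative
variable {G : Type*} [Group G]


variable {p : ℕ} [hp : Fact p.Prime]

/-- the representative of `z` modulo `p^n` -/
noncomputable def padicRep (z : ℤ_[p]) (n : ℕ) : ℤ := ((PadicInt.toZModPow n z).val : ℤ)

lemma padicRep_spec (z : ℤ_[p]) (n : ℕ) : ((p : ℤ_[p]) ^ n) ∣ (z - (padicRep z n : ℤ_[p])) := by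
  haveI : NeZero (p ^ n) := ⟨pow_ne_zero _ hp.out.pos.ne'⟩
  have hker : z - (padicRep z n : ℤ_[p]) ∈ RingHom.ker (PadicInt.toZModPow (p := p) n) := by
    rw [RingHom.mem_ker, map_sub,
      show ((padicRep z n : ℤ) : ℤ_[p]) = (((PadicInt.toZModPow n z).val : ℕ) : ℤ_[p]) by
        simp only [padicRep]; push_cast; ring,
      map_natCast, ZMod.natCast_rightInverse (PadicInt.toZModPow n z), sub_self]
  rw [PadicInt.ker_toZModPow] at hker
  exact (Ideal.mem_span_singleton).1 hker

/-- division with integer remainder in ℤ_p -/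
lemma padic_div_rem (v : ℤ_[p]) {c : ℕ} (hc : c ≠ 0) :
    ∃ (w : ℤ_[p]) (m : ℤ), v = (c : ℤ_[p]) * w + (m : ℤ_[p]) := by
  set k := c.factorization p with hk
  set c' := c / p ^ k with hc'
  have hdecomp : p ^ k * c' = c := Nat.ordProj_mul_ordCompl_eq_self c p
  have hndvd : ¬ (p ∣ c') := Nat.not_dvd_ordCompl hp.out hc
  have hunit : IsUnit (c' : ℤ_[p]) := by
    rw [PadicInt.isUnit_iff]
    rcases lt_or_eq_of_le (PadicInt.norm_le_one (c' : ℤ_[p])) with h | h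
    · exfalso
      apply hndvd
      have h' : ‖((c' : ℤ) : ℤ_[p])‖ < 1 := by exact_mod_cast h
      have := (PadicInt.norm_int_lt_one_iff_dvd (c' : ℤ)).1 h'
      exact_mod_cast this
    · exact h
  obtain ⟨y, hy⟩ := padicRep_spec v k
  obtain ⟨u, hu⟩ := hunit
  refine ⟨(u⁻¹ : ℤ_[p]ˣ) * y, padicRep v k, ?_⟩
  have hcc : (c : ℤ_[p]) = (p : ℤ_[p]) ^ k * (u : ℤ_[p]) := by
    rw [hu, ← hdecomp]; push_cast; ring
  rw [hcc]
  have h2 : (p : ℤ_[p]) ^ k * (u : ℤ_[p]) * ((u⁻¹ : ℤ_[p]ˣ) * y) = (p : ℤ_[p]) ^ k * y := by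
    rw [mul_assoc ((p : ℤ_[p]) ^ k), ← mul_assoc (u : ℤ_[p]), Units.mul_inv, one_mul]
  rw [h2, ← hy]
  ring

lemma padic_hom_trivial (hTF : Monoid.IsTorsionFree G) (hQ : NoRatSubgroup G)
    (hZp : NoPadicSubgroup G) (f : Multiplicative ℤ_[p] →* G) (x : Multiplicative ℤ_[p]) :
    f x = 1 := by
  have hni := hZp p f
  simp only [Function.Injective, not_forall] at hni
  obtain ⟨a, b, hab, hne⟩ := hni
  set z : ℤ_[p] := a.toAdd - b.toAdd with hz
  have hzne : z ≠ 0 := by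
    rw [hz, sub_ne_zero]
    exact fun h => hne (by simpa using congrArg Multiplicative.ofAdd h)
  have hfz : f (ofAdd z) = 1 := by
    rw [hz, ofAdd_sub, map_div]
    simp [hab]
  -- f kills all multiples of z
  have hmul : ∀ w : ℤ_[p], f (ofAdd (w * z)) = 1 := by
    intro w
    -- coherent division sequence
    have hrec : ∀ (v : ℤ_[p]) (j : ℕ), ∃ (w' : ℤ_[p]) (m : ℤ),
        v = ((j+1 : ℕ) : ℤ_[p]) * w' + (m : ℤ_[p]) := fun v j => padic_div_rem v (Nat.succ_ne_zero j)
    obtain ⟨W, hW0, hWstep⟩ : ∃ W : ℕ → ℤ_[p], W 0 = w ∧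
        ∀ j, ∃ m : ℤ, W j = ((j+1 : ℕ) : ℤ_[p]) * W (j+1) + (m : ℤ_[p]) := by
      refine ⟨fun j => Nat.rec w (fun j Wj => (hrec Wj j).choose) j, rfl, fun j => ?_⟩
      exact (hrec (Nat.rec w (fun j Wj => (hrec Wj j).choose) j) j).choose_spec
    have hcoh : ∀ j, (fun j => f (ofAdd (W j * z))) j
        = (fun j => f (ofAdd (W j * z))) (j+1) ^ (j+1) := by
      intro j
      obtain ⟨m, hm⟩ := hWstep j
      have h1 : W j * z = (j+1 : ℕ) • (W (j+1) * z) + m • z := by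
        rw [nsmul_eq_mul, zsmul_eq_mul, hm]
        push_cast
        ring
      simp only
      rw [h1, ofAdd_add, map_mul, ofAdd_nsmul, ofAdd_zsmul, map_pow, map_zpow, hfz, one_zpow,
        mul_one]
    have hg0 := coherent_trivial hTF hQ _ hcoh 0
    simpa [hW0] using hg0
  -- now kill everything
  set v : ℕ := z.valuation with hv
  have hspec := PadicInt.unitCoeff_spec hzne
  set u : ℤ_[p]ˣ := PadicInt.unitCoeff hzne with hu
  have hx : ((p : ℤ_[p]) ^ v) * x.toAdd = (x.toAdd * (u⁻¹ : ℤ_[p]ˣ)) * z := by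
    rw [hspec, ← hv]
    rw [show (x.toAdd * (u⁻¹ : ℤ_[p]ˣ)) * ((u : ℤ_[p]) * (p : ℤ_[p]) ^ v) =
      ((u⁻¹ : ℤ_[p]ˣ) * (u : ℤ_[p])) * x.toAdd * (p : ℤ_[p]) ^ v by ring]
    rw [Units.inv_mul, one_mul]
    ring
  have h1 : f x ^ (p ^ v) = 1 := by
    have : f (ofAdd (((p ^ v : ℕ) : ℤ_[p]) * x.toAdd)) = 1 := by
      push_cast
      rw [hx]
      exact hmul _
    rw [← this]
    rw [show ((p ^ v : ℕ) : ℤ_[p]) * x.toAdd = (p ^ v : ℕ) • x.toAdd by rw [nsmul_eq_mul]]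
    rw [ofAdd_nsmul, map_pow, ofAdd_toAdd]
  exact tf_pow_eq_one hTF (pow_ne_zero _ hp.out.pos.ne') h1


end PadicSec

section KlimSec
open Nat Multiplicative Filter
variable {G : Type*} [Group G]


variable {K : Type*} [Group K] [TopologicalSpace K] [IsTopologicalGroup K]
  [CompactSpace K] [T2Space K]

lemma klim_ex (k : K) (c : ℕ → ℤ) :
    ∃ x : K, Filter.Tendsto (fun n => k ^ c n) (Filter.hyperfilter ℕ) (nhds x) := by
  obtain ⟨x, -, hx⟩ := isCompact_univ.ultrafilter_le_nhds
    ((Filter.hyperfilter ℕ).map (fun n => k ^ c n)) (by simp [Filter.le_principal_iff])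
  exact ⟨x, hx⟩

noncomputable def klim (k : K) (c : ℕ → ℤ) : K := (klim_ex k c).choose

lemma klim_tendsto (k : K) (c : ℕ → ℤ) :
    Filter.Tendsto (fun n => k ^ c n) (Filter.hyperfilter ℕ) (nhds (klim k c)) :=
  (klim_ex k c).choose_spec

lemma klim_eq_of_tendsto {k : K} {c : ℕ → ℤ} {x : K}
    (h : Filter.Tendsto (fun n => k ^ c n) (Filter.hyperfilter ℕ) (nhds x)) :
    klim k c = x :=
  tendsto_nhds_unique (klim_tendsto k c) h

lemma klim_congr (k : K) {c d : ℕ → ℤ} (h : ∀ᶠ n in Filter.atTop, c n = d n) :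
    klim k c = klim k d := by
  apply klim_eq_of_tendsto
  apply (klim_tendsto k d).congr'
  filter_upwards [(Nat.hyperfilter_le_atTop h : ∀ᶠ n in (Filter.hyperfilter ℕ : Filter ℕ), c n = d n)]
    with n hn
  rw [hn]

lemma klim_add (k : K) (c d : ℕ → ℤ) :
    klim k (fun n => c n + d n) = klim k c * klim k d := by
  apply klim_eq_of_tendsto
  exact (((klim_tendsto k c).mul (klim_tendsto k d)).congr
    (fun n => (zpow_add k (c n) (d n)).symm))

lemma klim_zpow (k : K) (c : ℕ → ℤ) (m : ℤ) :
    klim k (fun n => c n * m) = (klim k c) ^ m := by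
  apply klim_eq_of_tendsto
  have h2 : Filter.Tendsto (fun x : K => x ^ m) (nhds (klim k c)) (nhds ((klim k c) ^ m)) :=
    ((continuous_zpow m).tendsto _)
  exact (h2.comp (klim_tendsto k c)).congr (fun n => (zpow_mul k (c n) m).symm)

lemma klim_const (k : K) (m : ℤ) : klim k (fun _ => m) = k ^ m :=
  klim_eq_of_tendsto tendsto_const_nhds

variable (phi : K →* G)

lemma psi_null (hTF : Monoid.IsTorsionFree G) (hQ : NoRatSubgroup G) (k : K) (c : ℕ → ℤ)
    (h : ∀ᶠ n in Filter.atTop, (n ! : ℤ) ∣ c n) : phi (klim k c) = 1 := by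
  have key : ∀ j, phi (klim k (fun n => c n / (j ! : ℤ)))
      = phi (klim k (fun n => c n / ((j+1)! : ℤ))) ^ (j+1) := by
    intro j
    have hev : ∀ᶠ n in Filter.atTop,
        c n / (j ! : ℤ) = (c n / ((j+1)! : ℤ)) * ((j+1 : ℕ) : ℤ) := by
      filter_upwards [h, Filter.eventually_ge_atTop (j+1)] with n hdvd hn
      have hd2 : (((j+1)! : ℕ) : ℤ) ∣ c n :=
        dvd_trans (by exact_mod_cast Nat.factorial_dvd_factorial hn) hdvd
      obtain ⟨e, he⟩ := hd2
      have hfact : (((j+1)! : ℕ) : ℤ) = (j ! : ℤ) * ((j+1 : ℕ) : ℤ) := by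
        push_cast [Nat.factorial_succ]; ring
      have hjne : (j ! : ℤ) ≠ 0 := by exact_mod_cast Nat.factorial_ne_zero j
      have hj1ne : (((j+1)! : ℕ) : ℤ) ≠ 0 := by exact_mod_cast Nat.factorial_ne_zero (j+1)
      rw [he, Int.mul_ediv_cancel_left _ hj1ne, hfact,
        show (j ! : ℤ) * ((j+1 : ℕ) : ℤ) * e = (j ! : ℤ) * (((j+1 : ℕ) : ℤ) * e) by ring,
        Int.mul_ediv_cancel_left _ hjne]
      ring
    rw [klim_congr k hev, klim_zpow, map_zpow]
    norm_cast
  have hcoh := coherent_trivial hTF hQ (fun j => phi (klim k (fun n => c n / (j ! : ℤ)))) key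
  have h0 := hcoh 0
  rw [show (fun n => c n / ((0: ℕ)! : ℤ)) = c from funext fun n => by
    simp [Nat.factorial]] at h0
  exact h0

lemma psi_congr (hTF : Monoid.IsTorsionFree G) (hQ : NoRatSubgroup G) (k : K) (c d : ℕ → ℤ)
    (h : ∀ᶠ n in Filter.atTop, (n ! : ℤ) ∣ (c n - d n)) :
    phi (klim k c) = phi (klim k d) := by
  have h1 : klim k c = klim k d * klim k (fun n => c n - d n) := by
    rw [← klim_add k d (fun n => c n - d n)]
    congr 1
    funext n
    ring
  rw [h1, map_mul, psi_null phi hTF hQ k _ h, mul_one]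


end KlimSec

section Main
open Multiplicative Filter

theorem compact_to_cotorsionFree_trivial
    (K : Type*) [Group K] [TopologicalSpace K] [IsTopologicalGroup K]
    [CompactSpace K] [T2Space K] (G : Type*) [Group G]
    (hTF : Monoid.IsTorsionFree G) (hQ : NoRatSubgroup G) (hZp : NoPadicSubgroup G)
    (φ : K →* G) : ∀ k : K, φ k = 1 := by
  intro k
  classical
  set u : ℕ → ℕ → ℤ := fun N n => (exists_u N n).choose with hu
  have huA : ∀ N n, ((Qp 0 N ^ n : ℕ) : ℤ) ∣ u N n := fun N n => (exists_u N n).choose_spec.1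
  have huB : ∀ N n, ((Qp N n ^ n : ℕ) : ℤ) ∣ ((N.factorial : ℕ) : ℤ) * u N n - 1 :=
    fun N n => (exists_u N n).choose_spec.2
  have hMdvd : ∀ n : ℕ, ((n.factorial : ℕ) : ℤ) ∣ ((Qp 0 n ^ n : ℕ) : ℤ) :=
    fun n => Int.natCast_dvd_natCast.2 (factorial_dvd_Qp_pow n)
  have hfacne : ∀ N : ℕ, ((N.factorial : ℕ) : ℤ) ≠ 0 :=
    fun N => by exact_mod_cast Nat.factorial_ne_zero N
  -- the key coherence
  have hcoh : ∀ N, φ (klim k (u N)) = φ (klim k (u (N+1))) ^ (N+1) := by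
    intro N
    set d : ℕ → ℤ := fun n => u N n - u (N+1) n * ((N+1 : ℕ) : ℤ) with hd
    -- split
    have hsplit : φ (klim k (u N)) =
        φ (klim k (u (N+1))) ^ (N+1) * φ (klim k d) := by
      have h1 : klim k (u N) = klim k (fun n => u (N+1) n * ((N+1 : ℕ) : ℤ) + d n) := by
        congr 1
        funext n
        simp only [hd]
        ring
      rw [h1, klim_add, map_mul, klim_zpow, map_zpow, zpow_natCast]
    -- common divisibility facts
    have hA2 : ∀ n, ((Qp 0 N ^ n : ℕ) : ℤ) ∣ u (N+1) n := by
      intro n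
      refine dvd_trans ?_ (huA (N+1) n)
      have hdd : Qp 0 N ∣ Qp 0 (N+1) := ⟨Qp N (N+1), (Qp_mul (Nat.zero_le N) (Nat.le_succ N)).symm⟩
      exact_mod_cast pow_dvd_pow_of_dvd hdd n
    have hAd : ∀ n, ((Qp 0 N ^ n : ℕ) : ℤ) ∣ d n := by
      intro n
      exact dvd_sub (huA N n) ((hA2 n).mul_right _)
    have hB'' : ∀ n, N + 1 ≤ n → ((Qp (N+1) n ^ n : ℕ) : ℤ) ∣ ((N.factorial : ℕ) : ℤ) * d n := by
      intro n hn
      have hQdvd : Qp (N+1) n ∣ Qp N n := ⟨Qp N (N+1), by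
        rw [mul_comm]; exact (Qp_mul (Nat.le_succ N) hn).symm⟩
      have h1 : ((Qp (N+1) n ^ n : ℕ) : ℤ) ∣ ((N.factorial : ℕ) : ℤ) * u N n - 1 :=
        dvd_trans (by exact_mod_cast pow_dvd_pow_of_dvd hQdvd n) (huB N n)
      have h2 : ((Qp (N+1) n ^ n : ℕ) : ℤ) ∣ (((N+1).factorial : ℕ) : ℤ) * u (N+1) n - 1 :=
        huB (N+1) n
      have heq : ((N.factorial : ℕ) : ℤ) * d n =
          (((N.factorial : ℕ) : ℤ) * u N n - 1)
          - ((((N+1).factorial : ℕ) : ℤ) * u (N+1) n - 1) := by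
        have hfs : (((N+1).factorial : ℕ) : ℤ) = ((N.factorial : ℕ) : ℤ) * ((N+1 : ℕ) : ℤ) := by
          push_cast [Nat.factorial_succ]
          ring
        simp only [hd]
        rw [hfs]
        ring
      rw [heq]
      exact dvd_sub h1 h2
    have hRd : ∀ n, N + 1 ≤ n →
        (((Qp 0 N ^ n) * (Qp (N+1) n ^ n) : ℕ) : ℤ) ∣ ((N.factorial : ℕ) : ℤ) * d n := by
      intro n hn
      have hcop : IsCoprime ((Qp 0 N ^ n : ℕ) : ℤ) ((Qp (N+1) n ^ n : ℕ) : ℤ) :=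
        Nat.isCoprime_iff_coprime.mpr (Nat.Coprime.pow n n (Qp_coprime (Nat.le_succ N)))
      have := hcop.mul_dvd ((hAd n).mul_left _) (hB'' n hn)
      exact_mod_cast this
    -- now show φ (klim k d) = 1
    have hdone : φ (klim k d) = 1 := by
      by_cases hprime : (N+1).Prime
      · -- prime case
        haveI : Fact (N+1).Prime := ⟨hprime⟩
        have hcopnat : ∀ n : ℕ, Nat.Coprime ((N+1) ^ n) ((Qp 0 N * Qp (N+1) n) ^ n) := by
          intro n
          have h1 : Nat.Coprime (N+1) (Qp 0 N) := by
            have h := (Qp_coprime (le_refl N) : Nat.Coprime (Qp 0 N) (Qp N (N+1))).symm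
            rwa [Qp_succ_prime hprime] at h
          have h2 : Nat.Coprime (N+1) (Qp (N+1) n) := by
            have h := (Qp_coprime (le_refl (N+1)) : Nat.Coprime (Qp N (N+1)) (Qp (N+1) n))
            rwa [Qp_succ_prime hprime] at h
          exact Nat.Coprime.pow n n (Nat.Coprime.mul_right h1 h2)
        have beta_ex : ∀ n : ℕ, ∃ b : ℤ, (((N+1) ^ n : ℕ) : ℤ) ∣ (b - 1) ∧
            (((Qp 0 N * Qp (N+1) n) ^ n : ℕ) : ℤ) ∣ b := by
          intro n
          obtain ⟨x, hx1, hx2⟩ := int_crt (hcopnat n) 1 0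
          exact ⟨x, hx1, by simpa using hx2⟩
        set β : ℕ → ℤ := fun n => (beta_ex n).choose with hβ
        have hβ1 : ∀ n, (((N+1) ^ n : ℕ) : ℤ) ∣ (β n - 1) := fun n => (beta_ex n).choose_spec.1
        have hβ2 : ∀ n, (((Qp 0 N * Qp (N+1) n) ^ n : ℕ) : ℤ) ∣ β n :=
          fun n => (beta_ex n).choose_spec.2
        have htrans : ∀ (w : ℤ) (n : ℕ), (((N+1 : ℕ) : ℤ_[N+1]) ^ n) ∣ (w : ℤ_[N+1]) →
            (((N+1) ^ n : ℕ) : ℤ) ∣ w := by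
          intro w n h
          have := (PadicInt.pow_p_dvd_int_iff (p := N+1) n w).1 h
          exact_mod_cast this
        have hmod : ∀ n, N + 1 ≤ n →
            ((N+1) ^ n) * ((Qp 0 N * Qp (N+1) n) ^ n) = Qp 0 n ^ n := by
          intro n hn
          rw [← mul_pow]
          congr 1
          have h5 : Qp N (N+1) * (Qp 0 N * Qp (N+1) n) = Qp 0 n := by
            rw [show Qp N (N+1) * (Qp 0 N * Qp (N+1) n)
                  = Qp 0 N * (Qp N (N+1) * Qp (N+1) n) by ring,
              Qp_mul (Nat.le_succ N) hn, Qp_mul (Nat.zero_le N) (le_trans (Nat.le_succ N) hn)]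
          rw [← h5, Qp_succ_prime hprime]
        set σ : ℤ_[N+1] → ℕ → ℤ := fun z n => padicRep z n * β n with hσ
        have hσcong : ∀ (z z' : ℤ_[N+1]), ∀ᶠ n in Filter.atTop,
            ((n.factorial : ℕ) : ℤ) ∣ (σ (z + z') n - (σ z n + σ z' n)) := by
          intro z z'
          filter_upwards [Filter.eventually_ge_atTop (N+1)] with n hn
          have hdiff : σ (z + z') n - (σ z n + σ z' n) =
              (padicRep (z + z') n - padicRep z n - padicRep z' n) * β n := by
            simp only [hσ]; ring
          rw [hdiff]
          have hp1 : (((N+1) ^ n : ℕ) : ℤ)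
              ∣ (padicRep (z + z') n - padicRep z n - padicRep z' n) := by
            apply htrans
            have h1 := padicRep_spec (z + z') n
            have h2 := padicRep_spec z n
            have h3 := padicRep_spec z' n
            have hne : ((padicRep (z + z') n - padicRep z n - padicRep z' n : ℤ) : ℤ_[N+1]) =
                -(((z + z') - (padicRep (z + z') n : ℤ_[N+1])) - (z - (padicRep z n : ℤ_[N+1]))
                  - (z' - (padicRep z' n : ℤ_[N+1]))) := by
              push_cast
              ring
            rw [hne]
            exact dvd_neg.2 (dvd_sub (dvd_sub h1 h2) h3)
          refine dvd_trans ?_ (mul_dvd_mul hp1 (hβ2 n))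
          rw [← Int.natCast_mul, hmod n hn]
          exact hMdvd n
        set F : Multiplicative (ℤ_[N+1]) →* G := MonoidHom.mk'
          (fun y => φ (klim k (σ y.toAdd))) (by
            intro a b
            show φ (klim k (σ (a.toAdd + b.toAdd))) = φ (klim k (σ a.toAdd)) * φ (klim k (σ b.toAdd))
            rw [psi_congr φ hTF hQ k _ _ (hσcong a.toAdd b.toAdd), klim_add, map_mul]) with hF
        have hF1 : φ (klim k (σ 1)) = 1 := by
          have h := padic_hom_trivial hTF hQ hZp F (Multiplicative.ofAdd (1 : ℤ_[N+1]))
          rw [hF] at h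
          simpa using h
        have hkey : ∀ᶠ n in Filter.atTop,
            ((n.factorial : ℕ) : ℤ) ∣ (d n * ((N.factorial : ℕ) : ℤ) - σ 1 n) := by
          filter_upwards [Filter.eventually_ge_atTop (N+1)] with n hn
          have hp1 : (((N+1) ^ n : ℕ) : ℤ) ∣ ((N.factorial : ℕ) : ℤ) * d n - 1 := by
            have ha : (((N+1) ^ n : ℕ) : ℤ) ∣ ((N.factorial : ℕ) : ℤ) * u N n - 1 := by
              refine dvd_trans ?_ (huB N n)
              have hdd : (N+1) ∣ Qp N n := by
                have h := (⟨Qp (N+1) n, (Qp_mul (Nat.le_succ N) hn).symm⟩ :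
                  Qp N (N+1) ∣ Qp N n)
                rwa [Qp_succ_prime hprime] at h
              exact_mod_cast pow_dvd_pow_of_dvd hdd n
            have hb : (((N+1) ^ n : ℕ) : ℤ) ∣ u (N+1) n := by
              refine dvd_trans ?_ (huA (N+1) n)
              have hdd : (N+1) ∣ Qp 0 (N+1) := by
                have h : Qp N (N+1) ∣ Qp 0 (N+1) := ⟨Qp 0 N, by
                  rw [mul_comm]
                  exact (Qp_mul (Nat.zero_le N) (Nat.le_succ N)).symm⟩
                rwa [Qp_succ_prime hprime] at h
              exact_mod_cast pow_dvd_pow_of_dvd hdd n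
            have heq : ((N.factorial : ℕ) : ℤ) * d n - 1 =
                (((N.factorial : ℕ) : ℤ) * u N n - 1)
                - (((N.factorial : ℕ) : ℤ) * ((N+1 : ℕ) : ℤ)) * u (N+1) n := by
              simp only [hd]; ring
            rw [heq]
            exact dvd_sub ha (hb.mul_left _)
          have hp2 : (((N+1) ^ n : ℕ) : ℤ) ∣ (σ 1 n - 1) := by
            have hr1 : (((N+1) ^ n : ℕ) : ℤ) ∣ (padicRep (1 : ℤ_[N+1]) n - 1) := by
              apply htrans
              have h1 := padicRep_spec (1 : ℤ_[N+1]) n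
              have hne : ((padicRep (1 : ℤ_[N+1]) n - 1 : ℤ) : ℤ_[N+1]) =
                  -((1 : ℤ_[N+1]) - (padicRep (1 : ℤ_[N+1]) n : ℤ_[N+1])) := by
                push_cast; ring
              rw [hne]
              exact dvd_neg.2 h1
            have heq : σ 1 n - 1 = padicRep (1 : ℤ_[N+1]) n * (β n - 1) +
                (padicRep (1 : ℤ_[N+1]) n - 1) := by
              simp only [hσ]; ring
            rw [heq]
            exact dvd_add ((hβ1 n).mul_left _) hr1
          have hpAll : (((N+1) ^ n : ℕ) : ℤ) ∣ (d n * ((N.factorial : ℕ) : ℤ) - σ 1 n) := by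
            have heq : d n * ((N.factorial : ℕ) : ℤ) - σ 1 n =
                (((N.factorial : ℕ) : ℤ) * d n - 1) - (σ 1 n - 1) := by ring
            rw [heq]
            exact dvd_sub hp1 hp2
          have hRAll : (((Qp 0 N * Qp (N+1) n) ^ n : ℕ) : ℤ) ∣
              (d n * ((N.factorial : ℕ) : ℤ) - σ 1 n) := by
            have h1 : (((Qp 0 N * Qp (N+1) n) ^ n : ℕ) : ℤ) ∣ d n * ((N.factorial : ℕ) : ℤ) := by
              have h2 := hRd n hn
              rw [mul_comm (((N.factorial : ℕ)) : ℤ) (d n)] at h2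
              have h3 : ((Qp 0 N * Qp (N+1) n) ^ n : ℕ) = (Qp 0 N ^ n) * (Qp (N+1) n ^ n) :=
                mul_pow _ _ n
              rw [h3]
              exact h2
            have h4 : (((Qp 0 N * Qp (N+1) n) ^ n : ℕ) : ℤ) ∣ σ 1 n := (hβ2 n).mul_left _
            exact dvd_sub h1 h4
          have hcop : IsCoprime (((N+1) ^ n : ℕ) : ℤ) (((Qp 0 N * Qp (N+1) n) ^ n : ℕ) : ℤ) :=
            Nat.isCoprime_iff_coprime.mpr (hcopnat n)
          have := hcop.mul_dvd hpAll hRAll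
          refine dvd_trans ?_ this
          rw [← Int.natCast_mul, hmod n hn]
          exact hMdvd n
        have hzp : φ (klim k d) ^ ((N.factorial : ℕ) : ℤ) = 1 := by
          rw [← map_zpow, ← klim_zpow k d ((N.factorial : ℕ) : ℤ),
            psi_congr φ hTF hQ k _ _ hkey]
          exact hF1
        exact tf_zpow_eq_one hTF (hfacne N) hzp
      · -- composite case
        have hQ1 : Qp N (N+1) = 1 := Qp_succ_composite hprime
        have hkey : ∀ᶠ n in Filter.atTop,
            ((n.factorial : ℕ) : ℤ) ∣ (d n * ((N.factorial : ℕ) : ℤ)) := by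
          filter_upwards [Filter.eventually_ge_atTop (N+1)] with n hn
          have hQeq : Qp 0 N ^ n * Qp (N+1) n ^ n = Qp 0 n ^ n := by
            rw [← mul_pow]
            congr 1
            calc Qp 0 N * Qp (N+1) n = Qp 0 N * (Qp N (N+1) * Qp (N+1) n) := by rw [hQ1, one_mul]
            _ = Qp 0 N * Qp N n := by rw [Qp_mul (Nat.le_succ N) hn]
            _ = Qp 0 n := Qp_mul (Nat.zero_le N) (le_trans (Nat.le_succ N) hn)
          have h2 := hRd n hn
          rw [mul_comm (((N.factorial : ℕ)) : ℤ) (d n)] at h2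
          rw [hQeq] at h2
          exact dvd_trans (hMdvd n) h2
        have hzp : φ (klim k d) ^ ((N.factorial : ℕ) : ℤ) = 1 := by
          rw [← map_zpow, ← klim_zpow k d ((N.factorial : ℕ) : ℤ)]
          exact psi_null φ hTF hQ k _ hkey
        exact tf_zpow_eq_one hTF (hfacne N) hzp
    rw [hsplit, hdone, mul_one]
  -- conclude
  have hall := coherent_trivial hTF hQ (fun N => φ (klim k (u N))) hcoh
  have h0 := hall 0
  have hid : φ (klim k (u 0)) = φ k := by
    have hev : ∀ᶠ n in Filter.atTop, ((n.factorial : ℕ) : ℤ) ∣ (u 0 n - (1 : ℤ)) := by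
      apply Filter.Eventually.of_forall
      intro n
      refine dvd_trans (hMdvd n) ?_
      have := huB 0 n
      simpa using this
    rw [psi_congr φ hTF hQ k (u 0) (fun _ => (1 : ℤ)) hev, klim_const, zpow_one]
  rw [← hid, h0]


end Main
end

section
/- If A is an abelian group that is a homomorphic image of a compact Hausdorff abelian topological group, A is nontrivial, and A is torsion-free, then A contains a subgroup isomorphic to ℚ or a subgroup isomorphic to ℤ_p for some prime p. -/
/-- The pre-2025 Mathlib notion (removed since): no nonzero element has finite additive order. -/
def AddMonoid.IsTorsionFree (G : Type*) [AddMonoid G] : Prop :=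
  ∀ g : G, g ≠ 0 → ¬IsOfFinAddOrder g

open Function

section Aux
variable {A : Type*} [AddCommGroup A]
variable {A : Type*} [AddCommGroup A]

private lemma tf_nsmul_cancel (hTF : AddMonoid.IsTorsionFree A) {n : ℕ} (hn : n ≠ 0) {c d : A}
    (h : n • c = n • d) : c = d := by
  by_contra hcd
  have hne : c - d ≠ 0 := sub_ne_zero.mpr hcd
  refine hTF _ hne (isOfFinAddOrder_iff_nsmul_eq_zero.mpr ⟨n, Nat.pos_of_ne_zero hn, ?_⟩)
  rw [smul_sub, h, sub_self]

private lemma tf_zsmul_cancel (hTF : AddMonoid.IsTorsionFree A) {m : ℤ} (hm : m ≠ 0) {c d : A}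
    (h : m • c = m • d) : c = d := by
  apply tf_nsmul_cancel hTF (Int.natAbs_ne_zero.mpr hm) (c := c) (d := d)
  rcases Int.natAbs_eq m with he | he
  · rw [← natCast_zsmul, ← natCast_zsmul, ← he, h]
  · have h2 : (-m) • c = (-m) • d := by rw [neg_smul, neg_smul, h]
    rw [he, neg_neg] at h2
    rw [← natCast_zsmul, ← natCast_zsmul, h2]

private lemma rat_case (hTF : AddMonoid.IsTorsionFree A) (a : A) (ha : a ≠ 0)
    (hdiv : ∀ n : ℕ, 0 < n → ∃ b : A, n • b = a) :
    ∃ g : ℚ →+ A, Function.Injective g := by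
  classical
  choose u hu using fun (n : ℕ) (hn : 0 < n) => hdiv n hn
  let v : ℕ → A := fun n => if hn : 0 < n then u n hn else 0
  have hv' : ∀ n : ℕ, 0 < n → (n : ℤ) • v n = a := by
    intro n hn
    simp only [v, dif_pos hn, natCast_zsmul]
    exact hu n hn
  have repr : ∀ (m : ℤ) (n : ℕ), 0 < n → ∀ q : ℚ, q = (m : ℚ) / (n : ℚ) →
      q.num • v q.den = m • v n := by
    intro m n hn q hq
    have hden : (0:ℚ) < (q.den : ℚ) := by exact_mod_cast q.pos
    have hnq : (0:ℚ) < (n : ℚ) := by exact_mod_cast hn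
    have key : q.num * (n : ℤ) = m * (q.den : ℤ) := by
      have h0 : (q.num : ℚ) / (q.den : ℚ) = (m:ℚ)/(n:ℚ) := by rw [Rat.num_div_den]; exact hq
      have h1 : (q.num : ℚ) * (n:ℚ) = (m:ℚ) * (q.den:ℚ) := (div_eq_div_iff hden.ne' hnq.ne').mp h0
      exact_mod_cast h1
    have hN : ((n : ℤ) * (q.den : ℤ)) ≠ 0 :=
      mul_ne_zero (Int.natCast_ne_zero.mpr hn.ne') (Int.natCast_ne_zero.mpr q.den_nz)
    apply tf_zsmul_cancel hTF hN
    have L : ((n:ℤ) * (q.den:ℤ)) • (q.num • v q.den) = (m * (q.den:ℤ)) • a := by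
      rw [smul_smul, show (n:ℤ) * (q.den:ℤ) * q.num = q.num * (n:ℤ) * (q.den:ℤ) by ring, key,
        mul_smul, hv' q.den q.pos]
    have R : ((n:ℤ) * (q.den:ℤ)) • (m • v n) = (m * (q.den:ℤ)) • a := by
      rw [smul_smul, show (n:ℤ) * (q.den:ℤ) * m = (m * (q.den:ℤ)) * (n:ℤ) by ring,
        mul_smul, hv' n hn]
    rw [L, R]
  have key1 : ∀ (m n : ℕ), 0 < m → 0 < n → (m:ℤ) • v (m * n) = v n := by
    intro m n hm hn
    apply tf_zsmul_cancel hTF (m := (n:ℤ)) (Int.natCast_ne_zero.mpr hn.ne')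
    rw [smul_smul, show (n:ℤ) * (m:ℤ) = ((m*n : ℕ) : ℤ) by push_cast; ring,
      hv' _ (Nat.mul_pos hm hn), hv' n hn]
  let g : ℚ → A := fun q => q.num • v q.den
  have hgdef : ∀ q : ℚ, g q = q.num • v q.den := fun _ => rfl
  have hadd : ∀ q r : ℚ, g (q + r) = g q + g r := by
    intro q r
    have hd1 : ((q.den:ℚ)) ≠ 0 := by exact_mod_cast q.den_nz
    have hd2 : ((r.den:ℚ)) ≠ 0 := by exact_mod_cast r.den_nz
    have hqr : q + r = ((q.num * r.den + q.den * r.num : ℤ) : ℚ) / ((q.den * r.den : ℕ) : ℚ) := by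
      have h0 : q + r = (q.num:ℚ)/(q.den:ℚ) + (r.num:ℚ)/(r.den:ℚ) := by
        rw [Rat.num_div_den, Rat.num_div_den]
      rw [h0, div_add_div _ _ hd1 hd2]
      push_cast
      ring
    have hpos : 0 < q.den * r.den := Nat.mul_pos q.pos r.pos
    have h1 : g (q + r) = (q.num * r.den + q.den * r.num) • v (q.den * r.den) :=
      repr _ _ hpos _ hqr
    have h2 : ((r.den:ℤ)) • v (q.den * r.den) = v q.den := by
      rw [mul_comm q.den r.den]; exact key1 _ _ r.pos q.pos
    have h3 : ((q.den:ℤ)) • v (q.den * r.den) = v r.den := by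
      exact key1 _ _ q.pos r.pos
    rw [h1, add_smul, hgdef, hgdef,
      show (q.num * (r.den:ℤ)) • v (q.den * r.den) = q.num • ((r.den:ℤ) • v (q.den * r.den)) from mul_smul _ _ _,
      show ((q.den:ℤ) * r.num) • v (q.den * r.den) = r.num • ((q.den:ℤ) • v (q.den * r.den)) by rw [mul_comm]; exact mul_smul _ _ _,
      h2, h3]
  have hinj : ∀ q : ℚ, g q = 0 → q = 0 := by
    intro q hq0
    rw [hgdef] at hq0
    have hvden : v q.den ≠ 0 := by
      intro h0
      apply ha
      rw [← hv' q.den q.pos, h0, smul_zero]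
    by_contra hq
    have hnum : q.num ≠ 0 := Rat.num_ne_zero.mpr hq
    exact hvden (tf_zsmul_cancel hTF hnum (by rw [hq0, smul_zero]))
  refine ⟨AddMonoidHom.mk' g hadd, ?_⟩
  intro q r hqr
  have hsub : g (q - r) = 0 := by
    have h := map_sub (AddMonoidHom.mk' g hadd) q r
    simp only [AddMonoidHom.mk'_apply] at h
    simp only [AddMonoidHom.mk'_apply] at hqr
    rw [h, hqr, sub_self]
  exact sub_eq_zero.mp (hinj _ hsub)

private lemma padic_case {K : Type*} [AddCommGroup K] [TopologicalSpace K] [IsTopologicalAddGroup K]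
    [CompactSpace K] [T2Space K] (f : K →+ A) (hf : Function.Surjective f)
    (hTF : AddMonoid.IsTorsionFree A) (p : ℕ) [hpf : Fact p.Prime] (a : A)
    (ha : ∀ b : A, (p:ℤ) • b ≠ a) :
    ∃ g : ℤ_[p] →+ A, Function.Injective g := by
  classical
  obtain ⟨k, hk⟩ := hf a
  -- the approximate fibers
  set S : ℤ_[p] → Set K :=
    fun α => closure {x : K | ∃ n : ℤ, x = n • k ∧ ((n : ZMod p) = PadicInt.toZMod α)} with hS
  have hSne : ∀ α, (S α).Nonempty := by
    intro α
    refine Set.Nonempty.closure ⟨(((PadicInt.toZMod α).val : ℤ)) • k, ⟨_, rfl, ?_⟩⟩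
    push_cast [ZMod.natCast_val, ZMod.cast_id]
    rfl
  have hSclosed : ∀ α, IsClosed (S α) := fun α => isClosed_closure
  have hSadd : ∀ α β x y, x ∈ S α → y ∈ S β → x + y ∈ S (α + β) := by
    intro α β x y hx hy
    refine map_mem_closure₂ continuous_add hx hy ?_
    rintro x' ⟨n, rfl, hn⟩ y' ⟨m, rfl, hm⟩
    refine ⟨n + m, by rw [add_smul], ?_⟩
    rw [map_add]
    push_cast
    rw [hn, hm]
  have hSneg : ∀ α x, x ∈ S α → -x ∈ S (-α) := by
    intro α x hx
    refine map_mem_closure continuous_neg hx ?_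
    rintro x' ⟨n, rfl, hn⟩
    refine ⟨-n, by rw [neg_smul], ?_⟩
    rw [map_neg]
    push_cast
    rw [hn]
  have hSzero : (0:K) ∈ S 0 := by
    refine subset_closure ⟨0, by rw [zero_smul], by rw [map_zero]; push_cast; rfl⟩
  have hSk : k ∈ S 1 := by
    refine subset_closure ⟨1, by rw [one_smul], by rw [map_one]; push_cast; rfl⟩
  have hSzsmul : ∀ (c : ℤ) α x, x ∈ S α → c • x ∈ S (c • α) := by
    intro c
    induction c using Int.induction_on with
    | zero => intro α x _; simpa using hSzero
    | succ i ih =>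
        intro α x hx
        have := hSadd _ _ _ _ (ih α x hx) hx
        have he : (i:ℤ) • α + α = ((i:ℤ)+1) • α := by rw [add_smul, one_smul]
        rw [he] at this
        rwa [show ((i:ℤ)+1) • x = (i:ℤ) • x + x by rw [add_smul, one_smul]]
    | pred i ih =>
        intro α x hx
        have := hSadd _ _ _ _ (ih α x hx) (hSneg α x hx)
        have he : (-(i:ℤ)) • α + -α = (-(i:ℤ)-1) • α := by rw [sub_smul, one_smul, neg_smul]; abel
        rw [he] at this
        rwa [show (-(i:ℤ)-1) • x = (-(i:ℤ)) • x + -x by rw [sub_smul, one_smul, neg_smul]; abel]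
  -- image of S 0 is p-divisible, image of S 1 is a + p-divisible
  have hS0f : ∀ x ∈ S 0, ∃ c : A, f x = (p:ℤ) • c := by
    have hT : IsClosed ((fun z : K => (p:ℤ) • z) '' closure (Set.range fun n : ℤ => n • k)) :=
      (isClosed_closure.isCompact.image (continuous_zsmul (p:ℤ))).isClosed
    have hsub : S 0 ⊆ (fun z : K => (p:ℤ) • z) '' closure (Set.range fun n : ℤ => n • k) := by
      refine closure_minimal ?_ hT
      rintro x ⟨n, rfl, hn⟩
      rw [map_zero] at hn
      have : ((p:ℤ)) ∣ n := by
        rwa [← ZMod.intCast_zmod_eq_zero_iff_dvd]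
      obtain ⟨j, rfl⟩ := this
      exact ⟨j • k, subset_closure ⟨j, rfl⟩, (mul_smul (p:ℤ) j k).symm⟩
    intro x hx
    obtain ⟨z, _, rfl⟩ := hsub hx
    exact ⟨f z, by rw [map_zsmul]⟩
  have hS1f : ∀ x ∈ S 1, ∃ c : A, f x = a + (p:ℤ) • c := by
    intro x hx
    have h1 : x + -k ∈ S 0 := by
      have := hSadd 1 (-1) x (-k) hx (hSneg 1 k hSk)
      simpa using this
    obtain ⟨c, hc⟩ := hS0f _ h1
    refine ⟨c, ?_⟩
    have : f (x + -k) = f x - a := by rw [map_add, map_neg, hk]; abel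
    rw [this] at hc
    rw [eq_add_of_sub_eq hc]
    abel
  -- existence of an additive selection, by compactness
  set P : Finset (ℤ_[p] × ℤ_[p]) → Set (ℤ_[p] → K) :=
    fun T => {s | (∀ γ, s γ ∈ S γ) ∧ ∀ q ∈ T, s q.1 + s q.2 = s (q.1 + q.2)} with hP
  have hPne : ∀ T, (P T).Nonempty := by
    intro T
    set G : Finset ℤ_[p] := T.image Prod.fst ∪ T.image Prod.snd with hG
    set H : Submodule ℤ ℤ_[p] := Submodule.span ℤ (G : Set ℤ_[p]) with hH
    haveI : Module.Finite ℤ H := Module.Finite.iff_fg.mpr (Submodule.fg_span (G.finite_toSet))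
    set b := Module.Free.chooseBasis ℤ H with hb
    set c : Module.Free.ChooseBasisIndex ℤ H → K := fun i => (hSne (b i : ℤ_[p])).some with hc
    have hcmem : ∀ i, c i ∈ S (b i : ℤ_[p]) := fun i => (hSne (b i : ℤ_[p])).some_mem
    set φ : H →ₗ[ℤ] K := Module.Basis.constr b ℤ c with hφdef
    have hφ : ∀ h : H, φ h ∈ S (h : ℤ_[p]) := by
      set Q : Submodule ℤ H :=
        { carrier := {h : H | φ h ∈ S (h : ℤ_[p])}
          add_mem' := by
            intro h h' hh hh'
            have := hSadd _ _ _ _ hh hh'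
            rwa [← map_add, ← Submodule.coe_add] at this
          zero_mem' := by
            simp only [Set.mem_setOf_eq, map_zero, Submodule.coe_zero]
            exact hSzero
          smul_mem' := by
            intro cz h hh
            have := hSzsmul cz _ _ hh
            rwa [← map_smul, ← Submodule.coe_smul] at this } with hQ
      have hbQ : ∀ i, b i ∈ Q := by
        intro i
        show φ (b i) ∈ S (b i : ℤ_[p])
        rw [hφdef, Module.Basis.constr_basis]
        exact hcmem i
      have : (⊤ : Submodule ℤ H) ≤ Q := by
        rw [← b.span_eq]
        rw [Submodule.span_le]
        rintro x ⟨i, rfl⟩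
        exact hbQ i
      exact fun h => this (Submodule.mem_top)
    set s : ℤ_[p] → K := fun γ => if hγ : γ ∈ H then φ ⟨γ, hγ⟩ else (hSne γ).some with hs
    have hsmem : ∀ γ, s γ ∈ S γ := by
      intro γ
      by_cases hγ : γ ∈ H
      · rw [hs]; simp only [dif_pos hγ]; exact hφ ⟨γ, hγ⟩
      · rw [hs]; simp only [dif_neg hγ]; exact (hSne γ).some_mem
    refine ⟨s, hsmem, ?_⟩
    intro q hq
    have hq1 : q.1 ∈ H := Submodule.subset_span (by
      simp only [hG, Finset.coe_union, Set.mem_union, Finset.coe_image, Set.mem_image]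
      exact Or.inl ⟨q, hq, rfl⟩)
    have hq2 : q.2 ∈ H := Submodule.subset_span (by
      simp only [hG, Finset.coe_union, Set.mem_union, Finset.coe_image, Set.mem_image]
      exact Or.inr ⟨q, hq, rfl⟩)
    have hq12 : q.1 + q.2 ∈ H := add_mem hq1 hq2
    rw [hs]
    simp only [dif_pos hq1, dif_pos hq2, dif_pos hq12]
    rw [← map_add]
    congr 1
  have hPdir : Directed (· ⊇ ·) P := by
    intro T₁ T₂
    refine ⟨T₁ ∪ T₂, ?_, ?_⟩
    · rintro s ⟨h1, h2⟩; exact ⟨h1, fun q hq => h2 q (Finset.mem_union_left _ hq)⟩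
    · rintro s ⟨h1, h2⟩; exact ⟨h1, fun q hq => h2 q (Finset.mem_union_right _ hq)⟩
  have hPclosed : ∀ T, IsClosed (P T) := by
    intro T
    have h1 : IsClosed {s : ℤ_[p] → K | ∀ γ, s γ ∈ S γ} := by
      have : {s : ℤ_[p] → K | ∀ γ, s γ ∈ S γ} = ⋂ γ, (fun s : ℤ_[p] → K => s γ) ⁻¹' (S γ) := by
        ext s; simp
      rw [this]
      exact isClosed_iInter fun γ => (hSclosed γ).preimage (continuous_apply γ)
    have h2 : IsClosed {s : ℤ_[p] → K | ∀ q ∈ T, s q.1 + s q.2 = s (q.1 + q.2)} := by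
      have : {s : ℤ_[p] → K | ∀ q ∈ T, s q.1 + s q.2 = s (q.1 + q.2)} =
          ⋂ q ∈ T, {s : ℤ_[p] → K | s q.1 + s q.2 = s (q.1 + q.2)} := by
        ext s; simp
      rw [this]
      refine isClosed_biInter fun q _ => isClosed_eq ?_ (continuous_apply _)
      exact ((continuous_apply _).add (continuous_apply _))
    exact h1.inter h2
  have hPcompact : ∀ T, IsCompact (P T) := fun T => (hPclosed T).isCompact
  obtain ⟨s, hs⟩ := IsCompact.nonempty_iInter_of_directed_nonempty_isCompact_isClosed
    P hPdir hPne hPcompact hPclosed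
  have hsP : ∀ T, s ∈ P T := Set.mem_iInter.mp hs
  have hsadd : ∀ α β : ℤ_[p], s (α + β) = s α + s β := by
    intro α β
    exact ((hsP {(α, β)}).2 (α, β) (Finset.mem_singleton_self _)).symm
  have hsmem : ∀ γ, s γ ∈ S γ := (hsP ∅).1
  set G0 : ℤ_[p] →+ K := AddMonoidHom.mk' s (fun α β => (hsadd α β)) with hG0
  set g : ℤ_[p] →+ A := f.comp G0 with hg
  refine ⟨g, ?_⟩
  rw [injective_iff_map_eq_zero]
  intro x hx0
  by_contra hxne
  -- decompose x = u * p^n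
  set n := x.valuation with hn
  set u := PadicInt.unitCoeff hxne with hu
  have hxu : x = (u : ℤ_[p]) * (p:ℤ_[p])^n := PadicInt.unitCoeff_spec hxne
  have hunit : IsUnit (PadicInt.toZMod (u : ℤ_[p])) := (Units.isUnit u).map PadicInt.toZMod
  set w0 : ZMod p := (PadicInt.toZMod (u : ℤ_[p]))⁻¹ with hw0
  set v : ℤ := (w0.val : ℤ) with hv
  have hker : PadicInt.toZMod ((v:ℤ_[p]) * (u : ℤ_[p]) - 1) = 0 := by
    rw [map_sub, map_mul, map_one, map_intCast]
    have : ((v : ZMod p)) = w0 := by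
      rw [hv]; push_cast [ZMod.natCast_val, ZMod.cast_id]; rfl
    rw [this, hw0, inv_mul_cancel₀ hunit.ne_zero, sub_self]
  have hmem : ((v:ℤ_[p]) * (u : ℤ_[p]) - 1) ∈ RingHom.ker (PadicInt.toZMod : ℤ_[p] →+* ZMod p) :=
    hker
  rw [PadicInt.ker_toZMod, PadicInt.maximalIdeal_eq_span_p, Ideal.mem_span_singleton] at hmem
  obtain ⟨w, hw⟩ := hmem
  -- p^n = v*x - p^(n+1)*w
  have hEq : ((p:ℤ_[p]))^n = (v:ℤ_[p]) * x - ((p:ℤ_[p]))^(n+1) * w := by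
    rw [hxu]
    linear_combination (-((p:ℤ_[p]))^n) * hw
  -- convert to smul form and apply g
  have hEq2 : ((p^n : ℕ)) • (1:ℤ_[p]) = v • x - ((p^(n+1) : ℕ)) • w := by
    rw [nsmul_eq_mul, nsmul_eq_mul, zsmul_eq_mul, mul_one]
    push_cast
    exact_mod_cast hEq
  have hg1 : ((p^n : ℕ)) • g 1 = v • g x - ((p^(n+1) : ℕ)) • g w := by
    rw [← map_nsmul, ← map_zsmul, ← map_nsmul, ← map_sub, ← hEq2]
  rw [hx0, smul_zero, zero_sub] at hg1
  -- hence g 1 is divisible by p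
  have hdiv1 : g 1 = (p:ℕ) • (-(g w)) := by
    apply tf_nsmul_cancel hTF (pow_ne_zero n hpf.out.ne_zero) (c := g 1)
    rw [hg1]
    simp only [pow_succ, mul_smul, smul_neg]
  -- but g 1 = a + p • c
  obtain ⟨c, hc⟩ := hS1f (s 1) (hsmem 1)
  have hga : g 1 = a + (p:ℤ) • c := by
    rw [hg, AddMonoidHom.comp_apply, hG0, AddMonoidHom.mk'_apply]
    exact hc
  apply ha ((-(g w)) - c)
  rw [smul_sub]
  have : ((p:ℤ)) • (-(g w)) = g 1 := by rw [natCast_zsmul, ← hdiv1]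
  rw [this, hga]
  abel

private lemma find_prime (hdc : ∀ a : A, a ≠ 0 → ∃ n : ℕ, 0 < n ∧ ∀ b : A, n • b ≠ a)
    [Nontrivial A] : ∃ q : ℕ, q.Prime ∧ ∃ a : A, ∀ b : A, q • b ≠ a := by
  by_contra hno
  push_neg at hno
  have hall : ∀ n : ℕ, 0 < n → ∀ a : A, ∃ b, n • b = a := by
    intro n
    induction n using Nat.strong_induction_on with
    | _ n ih =>
      intro hn a
      rcases eq_or_lt_of_le (show 1 ≤ n from hn) with h1 | h2
      · exact ⟨a, by rw [← h1]; simp⟩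
      · have hne1 : n ≠ 1 := by omega
        set q := n.minFac with hq
        have hqp : q.Prime := Nat.minFac_prime hne1
        have hdvd : q ∣ n := Nat.minFac_dvd n
        set m := n / q with hm
        have hmn : m * q = n := Nat.div_mul_cancel hdvd
        have hmlt : m < n := Nat.div_lt_self hn hqp.one_lt
        have hmpos : 0 < m := Nat.div_pos (Nat.minFac_le hn) hqp.pos
        obtain ⟨c, hc⟩ := ih m hmlt hmpos a
        obtain ⟨b, hb⟩ := hno q hqp c
        exact ⟨b, by rw [← hmn, mul_smul, hb, hc]⟩
  obtain ⟨a₀, ha₀⟩ := exists_ne (0 : A)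
  obtain ⟨n, hn, hnb⟩ := hdc a₀ ha₀
  obtain ⟨b, hb⟩ := hall n hn a₀
  exact hnb b hb

end Aux

theorem image_of_compact_abelian_contains_rat_or_padic
    (K : Type*) [AddCommGroup K] [TopologicalSpace K] [IsTopologicalAddGroup K]
    [CompactSpace K] [T2Space K]
    (A : Type*) [AddCommGroup A] [Nontrivial A]
    (f : K →+ A) (hf : Function.Surjective f)
    (hTF : AddMonoid.IsTorsionFree A) :
    (∃ g : ℚ →+ A, Function.Injective g) ∨
      ∃ (p : ℕ) (_ : Fact p.Prime), ∃ g : PadicInt p →+ A, Function.Injective g := by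
  by_cases hdivcase : ∃ a : A, a ≠ 0 ∧ ∀ n : ℕ, 0 < n → ∃ b : A, n • b = a
  · obtain ⟨a, ha, h⟩ := hdivcase
    exact Or.inl (rat_case hTF a ha h)
  · push_neg at hdivcase
    obtain ⟨p, hp, a, ha⟩ := find_prime (by
      intro a ha
      obtain ⟨n, hn1, hn2⟩ := hdivcase a ha
      exact ⟨n, hn1, hn2⟩)
    haveI : Fact p.Prime := ⟨hp⟩
    have ha' : ∀ b : A, (p:ℤ) • b ≠ a := by
      intro b hb
      apply ha b
      rwa [natCast_zsmul] at hb
    exact Or.inr ⟨p, ⟨hp⟩, padic_case f hf hTF p a ha'⟩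
end

section
/- If a group G contains an element of prime order p, then there exists a discontinuous group homomorphism from the compact topological group ∏_{n ∈ ℕ} ℤ/pℤ (with the product topology, each factor discrete) to G; in particular G is not lcH-slender. -/
universe u

/-- The submodule of finitely supported sequences in `ℕ → ZMod p`. -/
def finSupportSubmodule (p : ℕ) [Fact p.Prime] : Submodule (ZMod p) (ℕ → ZMod p) where
  carrier := {x | (Function.support x).Finite}
  add_mem' := fun ha hb => (ha.union hb).subset (Function.support_add _ _)
  zero_mem' := by simp [Function.support_zero]
  smul_mem' := fun c x hx => hx.subset (by
    intro i hi
    simp only [Function.mem_support] at hi ⊢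
    intro h0
    exact hi (by simp [Pi.smul_apply, h0]))

theorem not_lchSlender_of_prime_order (G : Type*) [Group G] (p : ℕ) (hp : p.Prime)
    (g : G) (hg : orderOf g = p) :
    (∃ φ : (∀ _ : ℕ, Multiplicative (ZMod p)) →* G,
      ¬ @IsOpen _ (@Pi.topologicalSpace ℕ (fun _ => Multiplicative (ZMod p)) (fun _ => ⊥))
        (φ.ker : Set (∀ _ : ℕ, Multiplicative (ZMod p)))) ∧
      ¬ LCHSlender.{0} G := by
  haveI : Fact p.Prime := ⟨hp⟩
  letI : TopologicalSpace (Multiplicative (ZMod p)) := ⊥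
  haveI : DiscreteTopology (Multiplicative (ZMod p)) := ⟨rfl⟩
  set S := finSupportSubmodule p with hS
  set one1 : ℕ → ZMod p := fun _ => 1 with hone1
  have hone : one1 ∉ S := by
    intro h
    have hsupp : Function.support one1 = Set.univ := by
      ext i; simp [hone1]
    have : (Function.support one1).Finite := h
    rw [hsupp] at this
    exact Set.infinite_univ this
  have hq : (Submodule.Quotient.mk one1 : (ℕ → ZMod p) ⧸ S) ≠ 0 := by
    simpa [Submodule.Quotient.mk_eq_zero] using hone
  obtain ⟨f, hf⟩ : ∃ f : Module.Dual (ZMod p) ((ℕ → ZMod p) ⧸ S),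
      f (Submodule.Quotient.mk one1) ≠ 0 := by
    by_contra h
    push_neg at h
    exact hq ((Module.forall_dual_apply_eq_zero_iff (ZMod p) _).mp h)
  set F : (ℕ → ZMod p) →ₗ[ZMod p] ZMod p := f ∘ₗ S.mkQ with hFdef
  have hFS : ∀ x ∈ S, F x = 0 := by
    intro x hx
    have : S.mkQ x = 0 := by simpa [Submodule.mkQ_apply, Submodule.Quotient.mk_eq_zero] using hx
    simp [hFdef, LinearMap.comp_apply, this]
  have hF1 : F one1 ≠ 0 := hf
  -- the homomorphism
  set T : (∀ _ : ℕ, Multiplicative (ZMod p)) → (ℕ → ZMod p) :=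
    fun x n => Multiplicative.toAdd (x n) with hT
  have hpow : ∀ a b : ZMod p, g ^ (a + b).val = g ^ a.val * g ^ b.val := by
    intro a b
    rw [ZMod.val_add]
    have hmm := pow_mod_orderOf g (a.val + b.val)
    rw [hg] at hmm
    rw [hmm, pow_add]
  let φ : (∀ _ : ℕ, Multiplicative (ZMod p)) →* G :=
    MonoidHom.mk' (fun x => g ^ (F (T x)).val) (by
      intro x y
      have hTxy : T (x * y) = T x + T y := rfl
      show g ^ (F (T (x * y))).val = g ^ (F (T x)).val * g ^ (F (T y)).val
      rw [hTxy, map_add, hpow])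
  have hker : ∀ x, φ x = 1 ↔ F (T x) = 0 := by
    intro x
    constructor
    · intro h
      have h' : g ^ (F (T x)).val = 1 := h
      have hdvd := orderOf_dvd_of_pow_eq_one h'
      rw [hg] at hdvd
      have hlt : (F (T x)).val < p := ZMod.val_lt _
      exact (ZMod.val_eq_zero _).mp (Nat.eq_zero_of_dvd_of_lt hdvd hlt)
    · intro h
      show g ^ (F (T x)).val = 1
      rw [h]; simp
  -- φ has non-open kernel
  have hnotopen : ¬ IsOpen (φ.ker : Set (∀ _ : ℕ, Multiplicative (ZMod p))) := by
    intro h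
    have h1 : (1 : ∀ _ : ℕ, Multiplicative (ZMod p)) ∈ (φ.ker : Set _) := φ.ker.one_mem
    obtain ⟨I, U, hU, hsub⟩ := isOpen_pi_iff.mp h 1 h1
    set y : ∀ _ : ℕ, Multiplicative (ZMod p) :=
      fun n => if n ∈ I then 1 else Multiplicative.ofAdd (1 : ZMod p) with hy
    have hyU : y ∈ (I : Set ℕ).pi U := by
      intro a ha
      have ha' : a ∈ I := by exact_mod_cast ha
      have : y a = 1 := by simp [hy, ha']
      rw [this]
      exact (hU a ha').2
    have hyker : F (T y) = 0 := (hker y).mp (hsub hyU)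
    set xI : ℕ → ZMod p := fun n => if n ∈ I then (1 : ZMod p) else 0 with hxI
    have hxIS : xI ∈ S := by
      apply Set.Finite.subset I.finite_toSet
      intro n hn
      simp only [Function.mem_support, hxI] at hn
      by_contra hnI
      exact hn (by simp [show n ∉ I from fun h => hnI (by exact_mod_cast h)])
    have hsum : T y + xI = one1 := by
      funext n
      by_cases hn : n ∈ I <;> simp [hT, hy, hxI, hn, hone1]
    have : F one1 = 0 := by
      rw [← hsum, map_add, hyker, hFS xI hxIS, add_zero]
    exact hF1 this
  refine ⟨⟨φ, hnotopen⟩, ?_⟩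
  intro hsl
  exact hnotopen (hsl (∀ _ : ℕ, Multiplicative (ZMod p)) φ)
end

section
/- If a group G contains a subgroup isomorphic to ℚ, then there exists a group homomorphism from the topological group ℝ (with its usual topology) to G whose kernel is not open; hence G is not lcH-slender. -/
universe u

instance : ConnectedSpace (Multiplicative ℝ) := inferInstanceAs (ConnectedSpace ℝ)

/-- A nonzero additive group hom from ℝ to ℚ, via a Hamel basis. -/
noncomputable def hamelIdx : ↑(Module.Basis.ofVectorSpaceIndex ℚ ℝ) :=
  (Module.Basis.ofVectorSpace ℚ ℝ).index_nonempty.some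

noncomputable def hamelHom : ℝ →+ ℚ :=
  ((Module.Basis.ofVectorSpace ℚ ℝ).coord hamelIdx).toAddMonoidHom

lemma hamelHom_ne_zero : ∃ x : ℝ, hamelHom x ≠ 0 := by
  refine ⟨Module.Basis.ofVectorSpace ℚ ℝ hamelIdx, ?_⟩
  have h : hamelHom (Module.Basis.ofVectorSpace ℚ ℝ hamelIdx) = 1 := by
    simp only [hamelHom, LinearMap.toAddMonoidHom_coe, Module.Basis.coord_apply, Module.Basis.repr_self,
      Finsupp.single_eq_same]
  rw [h]; norm_num

theorem not_lchSlender_of_rat_subgroup (G : Type*) [Group G]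
    (f : Multiplicative ℚ →* G) (hf : Function.Injective f) :
    (∃ φ : Multiplicative ℝ →* G, ¬ IsOpen (φ.ker : Set (Multiplicative ℝ))) ∧
      ¬ LCHSlender.{0} G := by
  obtain ⟨x, hx⟩ := hamelHom_ne_zero
  set ψ : Multiplicative ℝ →* Multiplicative ℚ := AddMonoidHom.toMultiplicative hamelHom
  set φ : Multiplicative ℝ →* G := f.comp ψ
  have key : ¬ IsOpen (φ.ker : Set (Multiplicative ℝ)) := by
    intro hopen
    have hclosed : IsClosed (φ.ker : Set (Multiplicative ℝ)) :=
      Subgroup.isClosed_of_isOpen _ hopen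
    have hcl : IsClopen (φ.ker : Set (Multiplicative ℝ)) := ⟨hclosed, hopen⟩
    have huniv : (φ.ker : Set (Multiplicative ℝ)) = Set.univ :=
      hcl.eq_univ ⟨1, φ.ker.one_mem⟩
    have hxker : (Multiplicative.ofAdd x) ∈ φ.ker := by
      have := huniv ▸ Set.mem_univ (Multiplicative.ofAdd x)
      simpa using this
    have : φ (Multiplicative.ofAdd x) = 1 := hxker
    have h1 : f (ψ (Multiplicative.ofAdd x)) = f 1 := by simpa [φ] using this
    have h2 : ψ (Multiplicative.ofAdd x) = 1 := hf h1
    apply hx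
    have : Multiplicative.ofAdd (hamelHom x) = Multiplicative.ofAdd (0 : ℚ) := by
      simpa [ψ] using h2
    exact Multiplicative.ofAdd.injective this
  refine ⟨⟨φ, key⟩, fun hs => key (hs (Multiplicative ℝ) φ)⟩
end

section
/- If a group G is such that every abstract group homomorphism from any completely metrizable topological group to G has open kernel (G is cm-slender), then G is torsion-free and contains no subgroup isomorphic to ℚ and no subgroup isomorphic to ℤ_p for any prime p. -/
universe u

/-- `G` is cm-slender: every abstract group homomorphism from a completely metrizable
topological group to `G` has open kernel. -/
def CMSlender (G : Type*) [Group G] : Prop :=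
  ∀ (L : Type u) [Group L] [tL : TopologicalSpace L] [IsTopologicalGroup L],
    (∃ m : MetricSpace L,
        m.toPseudoMetricSpace.toUniformSpace.toTopologicalSpace = tL ∧
          @CompleteSpace L m.toPseudoMetricSpace.toUniformSpace) →
    ∀ φ : L →* G, IsOpen (φ.ker : Set L)

/-- The eventually-zero sequences are dense in a countable product. -/
lemma dense_eventually_zero {α : Type*} [Zero α] [TopologicalSpace α] :
    Dense {x : ℕ → α | ∃ N, ∀ n ≥ N, x n = 0} := by
  rw [dense_iff_inter_open]
  rintro U hU ⟨x, hx⟩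
  obtain ⟨I, u, hu, hsub⟩ := isOpen_pi_iff.1 hU x hx
  refine ⟨fun n => if n ∈ I then x n else 0, hsub ?_, (I.sup id) + 1, fun n hn => ?_⟩
  · rw [Set.mem_pi]
    intro i hi
    rw [Finset.mem_coe] at hi
    simpa [if_pos hi] using (hu i hi).2
  · have hnI : n ∉ I := by
      intro hmem
      have := Finset.le_sup (f := id) hmem
      simp only [id] at this
      omega
    simp [hnI]

/-- There is a nonzero linear functional on `ℕ → ZMod p` vanishing on all
eventually-zero sequences. -/
lemma exists_bad_functional (p : ℕ) [Fact p.Prime] :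
    ∃ ℓ : (ℕ → ZMod p) →ₗ[ZMod p] ZMod p, (∃ x, ℓ x ≠ 0) ∧
      ∀ x : ℕ → ZMod p, (∃ N, ∀ n ≥ N, x n = 0) → ℓ x = 0 := by
  classical
  let S : Submodule (ZMod p) (ℕ → ZMod p) :=
    { carrier := {x | ∃ N, ∀ n ≥ N, x n = 0}
      add_mem' := by
        rintro a b ⟨N, hN⟩ ⟨M, hM⟩
        exact ⟨max N M, fun n hn => by
          simp [hN n (le_trans (le_max_left _ _) hn), hM n (le_trans (le_max_right _ _) hn)]⟩
      zero_mem' := ⟨0, fun n _ => rfl⟩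
      smul_mem' := by
        rintro c a ⟨N, hN⟩
        exact ⟨N, fun n hn => by simp [hN n hn]⟩ }
  have hS : S ≠ ⊤ := by
    intro htop
    have h1 : (fun _ => (1 : ZMod p)) ∈ S := htop ▸ Submodule.mem_top
    obtain ⟨N, hN⟩ := h1
    exact one_ne_zero (hN N le_rfl)
  have : Nontrivial ((ℕ → ZMod p) ⧸ S) :=
    Submodule.Quotient.nontrivial_iff.2 hS
  let B := Module.Basis.ofVectorSpace (ZMod p) ((ℕ → ZMod p) ⧸ S)
  obtain ⟨i⟩ := B.index_nonempty
  refine ⟨(B.coord i).comp S.mkQ, ⟨?_, ?_⟩⟩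
  · obtain ⟨y, hy⟩ := S.mkQ_surjective (B i)
    refine ⟨y, ?_⟩
    simp [hy]
  · intro x hx
    have : S.mkQ x = 0 := (Submodule.Quotient.mk_eq_zero S).2 hx
    simp [this]

theorem cmSlender_necessary (G : Type*) [Group G] (h : CMSlender.{0} G) :
    Monoid.IsTorsionFree G ∧ NoRatSubgroup G ∧ NoPadicSubgroup G := by
  refine ⟨?_, ?_, ?_⟩
  · -- torsion-free
    intro g hg1 hfin
    have hn0 : 0 < orderOf g := hfin.orderOf_pos
    have hn1 : orderOf g ≠ 1 := fun hh => hg1 (orderOf_eq_one_iff.1 hh)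
    set p := (orderOf g).minFac with hpdef
    have hp : p.Prime := Nat.minFac_prime hn1
    haveI : Fact p.Prime := ⟨hp⟩
    set a := g ^ (orderOf g / p) with hadef
    have hap : a ^ p = 1 := by
      rw [hadef, ← pow_mul, Nat.div_mul_cancel (Nat.minFac_dvd _), pow_orderOf_eq_one]
    have hane : a ≠ 1 := by
      intro h1
      have hdvd : orderOf g ∣ orderOf g / p := orderOf_dvd_iff_pow_eq_one.2 h1
      have hpos : 0 < orderOf g / p := Nat.div_pos (Nat.minFac_le hn0) hp.pos
      have h2 := Nat.le_of_dvd hpos hdvd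
      have h3 := Nat.div_lt_self hn0 hp.one_lt
      omega
    have horder : orderOf a = p := orderOf_eq_prime hap hane
    -- homomorphism from `ZMod p` into `Additive G`
    have hψℤ : (zmultiplesHom (Additive G) (Additive.ofMul a)) (p : ℤ) = 0 := by
      rw [zmultiplesHom_apply, ← ofMul_zpow, zpow_natCast, hap, ofMul_one]
    let ψ : ZMod p →+ Additive G :=
      ZMod.lift p ⟨zmultiplesHom (Additive G) (Additive.ofMul a), hψℤ⟩
    have hψ : ∀ c : ZMod p, ψ c = 0 → c = 0 := by
      intro c hc
      have hval : (((c.val : ℕ) : ℤ) : ZMod p) = c := by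
        push_cast
        exact ZMod.natCast_rightInverse c
      rw [← hval, ZMod.lift_coe, zmultiplesHom_apply, ← ofMul_zpow, zpow_natCast] at hc
      have hone : a ^ (c.val : ℕ) = 1 := by
        have := ofMul_eq_zero.1 hc
        exact this
      have hdvd : p ∣ c.val := by
        have hdvd' : orderOf a ∣ c.val := orderOf_dvd_of_pow_eq_one hone
        rwa [horder] at hdvd'
      have hv0 : c.val = 0 := Nat.eq_zero_of_dvd_of_lt hdvd (ZMod.val_lt c)
      rw [← hval, hv0]
      simp
    obtain ⟨ℓ, ⟨x₀, hx₀⟩, hℓ0⟩ := exists_bad_functional p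
    -- topology
    letI : TopologicalSpace (ZMod p) := ⊥
    haveI : DiscreteTopology (ZMod p) := ⟨rfl⟩
    haveI : IsTopologicalAddGroup (ZMod p) :=
      { continuous_add := continuous_of_discreteTopology
        continuous_neg := continuous_of_discreteTopology }
    haveI : PolishSpace (ZMod p) := inferInstance
    obtain ⟨m, hm, hc⟩ := (inferInstance : PolishSpace (ℕ → ZMod p)).complete
    let Φ : (ℕ → ZMod p) →+ Additive G := ψ.comp ℓ.toAddMonoidHom
    let φ : Multiplicative (ℕ → ZMod p) →* G :=
      { toFun := fun x => Additive.toMul (Φ x.toAdd)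
        map_one' := by simp
        map_mul' := by intro x y; simp }
    have hopen : IsOpen (φ.ker : Set (Multiplicative (ℕ → ZMod p))) :=
      h (Multiplicative (ℕ → ZMod p)) ⟨m, hm, hc⟩ φ
    have hker_sub : {x : ℕ → ZMod p | ∃ N, ∀ n ≥ N, x n = 0} ⊆
        (φ.ker : Set (Multiplicative (ℕ → ZMod p))) := by
      intro x hx
      have hΦ : Φ x = 0 := by
        show ψ (ℓ x) = 0
        rw [hℓ0 x hx, map_zero]
      have hx1 : φ (Multiplicative.ofAdd x) = 1 := by
        show Additive.toMul (Φ x) = 1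
        rw [hΦ, toMul_zero]
      exact hx1
    have hdense : Dense (φ.ker : Set (Multiplicative (ℕ → ZMod p))) :=
      Dense.mono hker_sub dense_eventually_zero
    have hclosed : IsClosed (φ.ker : Set (Multiplicative (ℕ → ZMod p))) :=
      Subgroup.isClosed_of_isOpen φ.ker hopen
    have huniv : (φ.ker : Set (Multiplicative (ℕ → ZMod p))) = Set.univ := by
      rw [← hclosed.closure_eq, hdense.closure_eq]
    have hx0mem : Multiplicative.ofAdd x₀ ∈ φ.ker := by
      rw [← SetLike.mem_coe, huniv]; trivial
    have hφx0 : Additive.toMul (Φ x₀) = 1 := hx0mem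
    have hΦ0 : Φ x₀ = 0 := by
      rwa [toMul_eq_one] at hφx0
    exact hx₀ (hψ _ hΦ0)
  · -- no ℚ subgroup
    intro f hf
    obtain ⟨C, hC⟩ := Submodule.exists_isCompl (Submodule.span ℚ {(1 : ℝ)})
    let proj := Submodule.linearProjOfIsCompl _ _ hC
    let e := LinearEquiv.toSpanNonzeroSingleton ℚ ℝ 1 one_ne_zero
    let π : ℝ →ₗ[ℚ] ℚ := e.symm.toLinearMap.comp proj
    have he1 : ((e 1 : Submodule.span ℚ {(1 : ℝ)}) : ℝ) = 1 := by
      simp [e]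
    have hproj : proj 1 = ⟨1, Submodule.mem_span_singleton_self (1 : ℝ)⟩ :=
      Submodule.linearProjOfIsCompl_apply_left hC ⟨1, Submodule.mem_span_singleton_self (1 : ℝ)⟩
    have he : e 1 = ⟨1, Submodule.mem_span_singleton_self (1 : ℝ)⟩ := Subtype.ext he1
    have hπ1 : π 1 = 1 := by
      show e.symm (proj 1) = 1
      rw [hproj, ← he, LinearEquiv.symm_apply_apply]
    let φ : Multiplicative ℝ →* G :=
      f.comp (AddMonoidHom.toMultiplicative π.toAddMonoidHom)
    obtain ⟨m, hm, hc⟩ := (inferInstance : PolishSpace ℝ).complete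
    have hopen : IsOpen (φ.ker : Set (Multiplicative ℝ)) :=
      h (Multiplicative ℝ) ⟨m, hm, hc⟩ φ
    have hclosed : IsClosed (φ.ker : Set (Multiplicative ℝ)) :=
      Subgroup.isClosed_of_isOpen φ.ker hopen
    haveI : PreconnectedSpace (Multiplicative ℝ) :=
      (inferInstance : PreconnectedSpace ℝ)
    have huniv : (φ.ker : Set (Multiplicative ℝ)) = Set.univ :=
      IsClopen.eq_univ ⟨hclosed, hopen⟩ ⟨1, SetLike.mem_coe.2 (one_mem _)⟩
    have hmem : Multiplicative.ofAdd (1 : ℝ) ∈ φ.ker := by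
      rw [← SetLike.mem_coe, huniv]; trivial
    have : f (Multiplicative.ofAdd (π 1)) = 1 := hmem
    rw [hπ1] at this
    have h1 : f (Multiplicative.ofAdd (1 : ℚ)) = f 1 := by
      rw [this, map_one]
    have h2 : (1 : ℚ) = 0 := by
      simpa using congrArg Multiplicative.toAdd (hf h1)
    norm_num at h2
  · -- no p-adic subgroup
    intro p hp f hf
    obtain ⟨m, hm, hc⟩ :
        ∃ m : MetricSpace (Multiplicative (PadicInt p)),
          m.toPseudoMetricSpace.toUniformSpace.toTopologicalSpace =
            (inferInstance : TopologicalSpace (Multiplicative (PadicInt p))) ∧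
            @CompleteSpace _ m.toPseudoMetricSpace.toUniformSpace :=
      ⟨(inferInstance : MetricSpace (PadicInt p)), rfl, inferInstance⟩
    have hopen : IsOpen (f.ker : Set (Multiplicative (PadicInt p))) :=
      h (Multiplicative (PadicInt p)) ⟨m, hm, hc⟩ f
    have hker : f.ker = ⊥ := (MonoidHom.ker_eq_bot_iff f).2 hf
    rw [hker] at hopen
    have hzero : IsOpen ({0} : Set (PadicInt p)) := by
      have : ((⊥ : Subgroup (Multiplicative (PadicInt p))) : Set (Multiplicative (PadicInt p))) = {1} :=
        Subgroup.coe_bot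
      rw [this] at hopen
      exact hopen
    obtain ⟨ε, hε, hball⟩ := Metric.isOpen_iff.1 hzero 0 rfl
    have hp1 : (1 : ℝ) / p < 1 := by
      have := hp.out.one_lt
      rw [div_lt_one (by positivity)]
      exact_mod_cast this
    obtain ⟨n, hn⟩ := exists_pow_lt_of_lt_one hε hp1
    have hnorm : ‖((p : PadicInt p)) ^ n‖ < ε := by
      rw [PadicInt.norm_p_pow]
      calc ((p : ℝ) ^ (-(n : ℤ))) = ((1 : ℝ)/p) ^ n := by
            rw [zpow_neg, zpow_natCast, one_div, inv_pow]
        _ < ε := hn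
    have hmem : ((p : PadicInt p)) ^ n ∈ Metric.ball (0 : PadicInt p) ε := by
      rw [Metric.mem_ball, dist_zero_right]
      exact hnorm
    have hzero' : ((p : PadicInt p)) ^ n = 0 := hball hmem
    have hpne : (p : PadicInt p) ≠ 0 := by
      exact_mod_cast (Nat.cast_ne_zero (R := PadicInt p)).2 hp.out.ne_zero
    exact pow_ne_zero n hpne hzero'
end
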